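/- Let a_1 ≥ 2, a_2 ≥ 3 be coprime integers, 0 < b_1 < a_1, 0 < b_2 < a_2, set α_1 = 1 − b_1/a_1, α_2 = b_2/a_2, a = a_1 a_2, b = a − b_1 a_2 − b_2 a_1 ≥ 2. Suppose b_1/a_1 ≥ 1/2, 2α_2 > α_1, and (when b_1/a_1 = 1/2) that a − bv = 1 for a positive integer v. Then (α_1 − α_2)/α_1 + α_1 < 1 − 1/a. -/

import Mathlib

theorem stmt_18 (a₁ a₂ b₁ b₂ : ℤ) (ha₁ : 2 ≤ a₁) (ha₂ : 3 ≤ a₂)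
    (hcop : IsCoprime a₁ a₂)
    (hb₁ : 0 < b₁) (hb₁' : b₁ < a₁) (hb₂ : 0 < b₂) (hb₂' : b₂ < a₂)
    (α₁ α₂ : ℚ) (hα₁ : α₁ = 1 - (b₁ : ℚ) / a₁) (hα₂ : α₂ = (b₂ : ℚ) / a₂)
    (a b : ℤ) (hadef : a = a₁ * a₂) (hbdef : b = a - b₁ * a₂ - b₂ * a₁) (hb2 : 2 ≤ b)
    (hhalf : (1 : ℚ) / 2 ≤ (b₁ : ℚ) / a₁)
    (h6 : α₁ < 2 * α₂)
    (hbez : (b₁ : ℚ) / a₁ = 1 / 2 → ∃ v : ℤ, 0 < v ∧ a - b * v = 1) :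
    (α₁ - α₂) / α₁ + α₁ < 1 - 1 / (a : ℚ) := by
  have hA1 : (0:ℚ) < (a₁:ℚ) := by exact_mod_cast lt_of_lt_of_le (by norm_num) ha₁
  have hA2 : (0:ℚ) < (a₂:ℚ) := by exact_mod_cast lt_of_lt_of_le (by norm_num) ha₂
  set c : ℤ := a₁ - b₁ with hc
  have hcpos : 0 < c := by omega
  have hCQ : (0:ℚ) < (c:ℚ) := by exact_mod_cast hcpos
  have hcq : (c:ℚ) = (a₁:ℚ) - b₁ := by rw [hc]; push_cast; ring
  -- integer form of h6
  have h6' : c * a₂ < 2 * b₂ * a₁ := by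
    rw [hα₁, hα₂] at h6
    have h : (c:ℚ) / a₁ < (2 * b₂ : ℤ) / a₂ := by
      rw [hcq, sub_div, div_self hA1.ne']
      push_cast
      rw [mul_div_assoc] at *
      linarith
    rw [div_lt_div_iff₀ hA1 hA2] at h
    exact_mod_cast h
  -- integer form of hhalf
  have hhalf' : a₁ ≤ 2 * b₁ := by
    rw [div_le_div_iff₀ (by norm_num) hA1] at hhalf
    have : (1:ℤ) * a₁ ≤ b₁ * 2 := by exact_mod_cast hhalf
    omega
  -- key integer inequality
  have key : c ^ 2 * a₂ + c < b₂ * a₁ ^ 2 := by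
    rcases lt_or_eq_of_le hhalf' with hlt | heq
    · -- 2c ≤ a₁ - 1
      have h2c : 2 * c ≤ a₁ - 1 := by omega
      nlinarith [mul_le_mul_of_nonneg_left (show c * a₂ ≤ 2 * b₂ * a₁ - 1 by omega)
          (show (0:ℤ) ≤ a₁ - 1 by omega),
        mul_le_mul_of_nonneg_right h2c (show (0:ℤ) ≤ c * a₂ by positivity),
        mul_pos hb₂ (lt_of_lt_of_le (by norm_num : (0:ℤ) < 2) ha₁)]
    · -- a₁ = 2 c
      have ha12c : a₁ = 2 * c := by omega
      have hsq : a₁ ^ 2 = 4 * c ^ 2 := by rw [ha12c]; ring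
      have ha2lt : a₂ < 4 * b₂ := by nlinarith
      rcases lt_or_eq_of_le (show a₂ ≤ 4 * b₂ - 1 by omega) with h2 | h2
      · nlinarith [mul_le_mul_of_nonneg_left (show a₂ ≤ 4 * b₂ - 2 by omega) (sq_nonneg c),
          mul_nonneg hcpos.le (show (0:ℤ) ≤ c - 1 by omega)]
      · -- a₂ = 4 b₂ - 1 : contradiction via Bezout
        exfalso
        have hfrac : (b₁ : ℚ) / a₁ = 1 / 2 := by
          rw [show a₁ = 2 * b₁ by omega]
          push_cast
          rw [div_eq_div_iff (by positivity) (by norm_num)]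
          ring
        obtain ⟨v, hv, hbezv⟩ := hbez hfrac
        rw [hbdef, hadef, heq, h2] at hbezv
        have hc1 : c * (2 * (4 * b₂ - 1) - (2 * b₂ - 1) * v) = 1 := by
          rw [hc, heq]
          linear_combination hbezv
        have hceq : c = 1 := Int.eq_one_of_mul_eq_one_right (by omega) hc1
        rw [hceq, one_mul] at hc1
        have hdvd : (2 * b₂ - 1) ∣ 1 := ⟨v - 4, by linear_combination hc1⟩
        have hle := Int.le_of_dvd (by norm_num) hdvd
        have hb₁1 : b₁ = 1 := by omega
        have hbval : b = 2 * b₂ - 1 := by rw [hbdef, hadef, heq, h2, hb₁1]; ring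
        omega
  -- back to ℚ
  have keyQ : (c:ℚ) ^ 2 * a₂ + c < b₂ * a₁ ^ 2 := by exact_mod_cast key
  have hα₁' : α₁ = (c : ℚ) / a₁ := by rw [hα₁, hcq, sub_div, div_self hA1.ne']
  have expand : ((c:ℚ)/a₁ - b₂/a₂)/((c:ℚ)/a₁) = 1 - (b₂*a₁)/(a₂*c) := by
    field_simp
  have hmain : (c:ℚ)/a₁ + 1/(a₁*a₂) < (b₂*a₁)/(a₂*c) := by
    have hcomb : (c:ℚ)/a₁ + 1/(a₁*a₂) = ((c:ℚ)*a₂+1)/(a₁*a₂) := by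
      field_simp
    rw [hcomb, div_lt_div_iff₀ (by positivity) (by positivity)]
    nlinarith [mul_lt_mul_of_pos_right keyQ hA2]
  rw [hα₁', hα₂, hadef]
  push_cast
  rw [expand]
  linarith
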